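/- Suppose F is injective and Σ is an F-spanning set for Γ. Then the language over the alphabet Σ × Σ consisting of all words (x_0,y_0)(x_1,y_1)⋯(x_{n−1},y_{n−1}) such that [x_0⋯x_{n−1}]_F = [y_0⋯y_{n−1}]_F is regular. (Equivalently, the equivalence relation w ∼ u on Σ*, defined by length(w) = length(u) and [w]_F = [u]_F, is a regular subset of (Σ×Σ)*.) -/

import Mathlib

open Pointwise

/-- `[w]_F`: the base-`F` evaluation of a word `w = x₀x₁⋯x_m`,
namely `x₀ + F x₁ + ⋯ + F^m x_m`, with `[∅]_F = 0`. -/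
def wordVal {Γ : Type*} [AddCommGroup Γ] (F : AddMonoid.End Γ) : List Γ → Γ
  | [] => 0
  | x :: xs => x + F (wordVal F xs)

/-- `Sig` is an `F`-spanning set for `Γ`. -/
def IsSpanningSet {Γ : Type*} [AddCommGroup Γ] (F : AddMonoid.End Γ) (Sig : Set Γ) : Prop :=
  Sig.Finite ∧
  (0 : Γ) ∈ Sig ∧ (∀ x ∈ Sig, -x ∈ Sig) ∧
  (∀ x : Γ, F x ∈ Sig → x ∈ Sig) ∧
  (∀ x : Γ, ∃ w : List Γ, (∀ y ∈ w, y ∈ Sig) ∧ wordVal F w = x) ∧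
  (∀ x₁ ∈ Sig, ∀ x₂ ∈ Sig, ∀ x₃ ∈ Sig, ∀ x₄ ∈ Sig, ∀ x₅ ∈ Sig,
    ∃ t ∈ Sig, ∃ t' ∈ Sig, x₁ + x₂ + x₃ + x₄ + x₅ = t + F t') ∧
  (∀ x₁ ∈ Sig, ∀ x₂ ∈ Sig, ∀ x₃ ∈ Sig,
    (∃ y : Γ, x₁ + x₂ + x₃ = F y) → ∃ t ∈ Sig, x₁ + x₂ + x₃ = F t)

/-- If `F` is injective and `Σ` is an `F`-spanning set for `Γ`, then
the language over `Σ × Σ` of pairs of words of the same length having equal base-`F`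
values is regular. -/
theorem eq_wordVal_lang_regular {Γ : Type*} [AddCommGroup Γ] (F : AddMonoid.End Γ)
    (hF : Function.Injective ⇑F) (Sig : Set Γ) (hSig : IsSpanningSet F Sig) :
    Language.IsRegular {w : List (↥Sig × ↥Sig) |
      wordVal F (w.map fun p => (p.1 : Γ)) = wordVal F (w.map fun p => (p.2 : Γ))} := by
  classical
  obtain ⟨hfin, h0, hneg, -, -, -, h7⟩ := hSig
  haveI : Fintype ↥Sig := hfin.fintype
  -- injectivity of powers of F
  have hmul : ∀ (G H : AddMonoid.End Γ) (x : Γ), (G * H) x = G (H x) := fun _ _ _ => rfl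
  have hpow : ∀ (n : ℕ) (x : Γ), (F ^ (n + 1)) x = F ((F ^ n) x) := by
    intro n x; rw [pow_succ']; exact hmul _ _ _
  have hFn : ∀ n : ℕ, Function.Injective ⇑(F ^ n) := by
    intro n
    induction n with
    | zero => simp only [pow_zero]; exact fun a b h => h
    | succ n ih =>
      intro a b h
      rw [hpow, hpow] at h
      exact ih (hF h)
  set M : DFA (↥Sig × ↥Sig) (Option ↥Sig) :=
    { step := fun s p => s.bind fun c =>
        if h : ∃ t ∈ Sig, F t = (c : Γ) + (p.1 : Γ) - (p.2 : Γ) then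
          some ⟨h.choose, h.choose_spec.1⟩ else none,
      start := some ⟨0, h0⟩,
      accept := {some ⟨0, h0⟩} } with hM
  have hnone : ∀ w : List (↥Sig × ↥Sig), M.evalFrom none w = none := by
    intro w
    induction w with
    | nil => rfl
    | cons p w ih => exact ih
  have hstepcons : ∀ (s : Option ↥Sig) (p : ↥Sig × ↥Sig) (w : List (↥Sig × ↥Sig)),
      M.evalFrom s (p :: w) = M.evalFrom (M.step s p) w := fun _ _ _ => rfl
  have key : ∀ (w : List (↥Sig × ↥Sig)) (c : ↥Sig),
      (M.evalFrom (some c) w = none →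
        ∀ d : Γ, (c : Γ) + (wordVal F (w.map fun p => (p.1 : Γ))
          - wordVal F (w.map fun p => (p.2 : Γ))) ≠ (F ^ w.length) d) ∧
      (∀ d : ↥Sig, M.evalFrom (some c) w = some d →
        (c : Γ) + (wordVal F (w.map fun p => (p.1 : Γ))
          - wordVal F (w.map fun p => (p.2 : Γ))) = (F ^ w.length) (d : Γ)) := by
    intro w
    induction w with
    | nil =>
      intro c
      constructor
      · intro h; exact absurd h (by simp [DFA.evalFrom])
      · intro d hd
        have : c = d := by simpa [DFA.evalFrom] using hd
        subst this
        simp [wordVal]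
    | cons p w ih =>
      intro c
      have hstep : M.step (some c) p =
          if h : ∃ t ∈ Sig, F t = (c : Γ) + (p.1 : Γ) - (p.2 : Γ) then
            some ⟨h.choose, h.choose_spec.1⟩ else none := rfl
      by_cases h : ∃ t ∈ Sig, F t = (c : Γ) + (p.1 : Γ) - (p.2 : Γ)
      · have hstep' : M.step (some c) p = some ⟨h.choose, h.choose_spec.1⟩ := by
          rw [hstep, dif_pos h]
        have ht := h.choose_spec.2
        set t : ↥Sig := ⟨h.choose, h.choose_spec.1⟩ with htdef
        have heval : M.evalFrom (some c) (p :: w) = M.evalFrom (some t) w := by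
          rw [hstepcons, hstep']
        set X := wordVal F (w.map fun p => (p.1 : Γ)) with hX
        set Y := wordVal F (w.map fun p => (p.2 : Γ)) with hY
        have hcalc : (c : Γ) + (wordVal F ((p :: w).map fun p => (p.1 : Γ))
            - wordVal F ((p :: w).map fun p => (p.2 : Γ)))
            = F ((t : Γ) + (X - Y)) := by
          have ht' : F (t : Γ) = (c : Γ) + (p.1 : Γ) - (p.2 : Γ) := ht
          simp only [List.map_cons, wordVal, ← hX, ← hY]
          rw [map_add, map_sub, ht']
          abel
        constructor
        · intro hn d hd
          rw [heval] at hn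
          have := (ih t).1 hn d
          apply this
          apply hF
          rw [← hcalc, hd, List.length_cons, hpow]
        · intro d hd
          rw [heval] at hd
          have := (ih t).2 d hd
          rw [hcalc, this, List.length_cons, hpow]
      · have hstep' : M.step (some c) p = none := by rw [hstep, dif_neg h]
        have heval : M.evalFrom (some c) (p :: w) = none := by
          rw [hstepcons, hstep']; exact hnone w
        constructor
        · intro _ d hd
          set X := wordVal F (w.map fun p => (p.1 : Γ)) with hX
          set Y := wordVal F (w.map fun p => (p.2 : Γ)) with hY
          have hd' : (c : Γ) + ((p.1 : Γ) + F X - ((p.2 : Γ) + F Y))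
              = F ((F ^ w.length) d) := by
            have hd'' := hd
            rw [List.length_cons, hpow] at hd''
            simp only [List.map_cons, wordVal, ← hX, ← hY] at hd''
            exact hd''
          have hmem : (c : Γ) + (p.1 : Γ) + (-(p.2 : Γ)) = F ((F ^ w.length) d - (X - Y)) := by
            rw [map_sub, map_sub, ← hd']
            abel
          obtain ⟨t, htS, htt⟩ := h7 _ c.2 _ p.1.2 _ (hneg _ p.2.2) ⟨_, hmem⟩
          exact h ⟨t, htS, by rw [← htt]; abel⟩
        · intro d hd
          rw [heval] at hd
          exact absurd hd (by simp)
  refine ⟨Option (Fin (Fintype.card ↥Sig)), inferInstance,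
    DFA.reindex ((Fintype.equivFin ↥Sig).optionCongr) M, ?_⟩
  rw [DFA.accepts_reindex]
  ext w
  have hacc : w ∈ M.accepts ↔ M.evalFrom (some ⟨0, h0⟩) w = some ⟨0, h0⟩ := Iff.rfl
  rw [hacc]
  constructor
  · intro hw
    have h2 := (key w ⟨0, h0⟩).2 _ hw
    exact sub_eq_zero.mp (by simpa using h2)
  · intro hw
    have hw' : wordVal F (w.map fun p => (p.1 : Γ)) = wordVal F (w.map fun p => (p.2 : Γ)) := hw
    have hdiff : ((⟨0, h0⟩ : ↥Sig) : Γ) + (wordVal F (w.map fun p => (p.1 : Γ))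
        - wordVal F (w.map fun p => (p.2 : Γ))) = (F ^ w.length) (0 : Γ) := by
      rw [hw']; simp
    cases heq : M.evalFrom (some ⟨0, h0⟩) w with
    | none => exact absurd hdiff ((key w ⟨0, h0⟩).1 heq 0)
    | some d =>
      have := (key w ⟨0, h0⟩).2 d heq
      have hd0 : (d : Γ) = 0 := hFn w.length (by rw [← this, hdiff, map_zero])
      congr 1
      exact Subtype.ext hd0
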